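/- Let n ≥ 4. For all 1 ≤ a < b < c < d ≤ n, the following strict inequalities between weights hold: weight({a,b}) + weight({c,d}) > weight({a,c}) + weight({b,d}), and weight({a,d}) + weight({b,c}) > weight({a,c}) + weight({b,d}). In other words, each of the two non-crossing perfect matchings on four points of a circle has strictly larger total weight than the crossing matching on the same four points; consequently, for the weight-refining monomial order, the leading monomial of x_{ab}x_{cd} − x_{ac}x_{bd} is x_{ab}x_{cd}, and that of x_{ad}x_{bc} − x_{ac}x_{bd} is x_{ad}x_{bc}. -/

import Mathlib

open Finset

/-- The set `P` of 2-element subsets of `{1,…,n}`, encoded as ordered pairs. -/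
abbrev Edge (n : ℕ) : Type := {p : Fin n × Fin n // p.1 < p.2}

/-- Entry `γ_{uv}` of a vector `γ ∈ ℤ^P` at the unordered pair `{u,v}` (0 when `u = v`). -/
def ent {n : ℕ} (γ : Edge n → ℤ) (u v : Fin n) : ℤ :=
  if h : u < v then γ ⟨(u, v), h⟩ else if h : v < u then γ ⟨(v, u), h⟩ else 0

/-- Entry at `{u,v}` of a vector in `ℕ^P`. -/
def entN {n : ℕ} (x : Edge n → ℕ) (u v : Fin n) : ℕ :=
  if h : u < v then x ⟨(u, v), h⟩ else if h : v < u then x ⟨(v, u), h⟩ else 0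

/-- Degree sequence: `d(γ)_u = ∑_{v ≠ u} γ_{uv}`. -/
def degSeq {n : ℕ} (γ : Edge n → ℤ) (u : Fin n) : ℤ := ∑ v, ent γ u v

/-- Color sequence: `c(γ)_{ij} = ∑ γ_{uv}` over `{u,v} ∈ P` with `{z u, z v} = {i,j}`. -/
def colorSeq {n k : ℕ} (z : Fin n → Fin k) (γ : Edge n → ℤ) (i j : Fin k) : ℤ :=
  ∑ e : Edge n,
    if (z e.1.1 = i ∧ z e.1.2 = j) ∨ (z e.1.1 = j ∧ z e.1.2 = i) then γ e else 0

/-- `γ ∈ ker_ℤ DC_{n,z}`: both the degree sequence and the color sequence vanish. -/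
def inKer {n k : ℕ} (z : Fin n → Fin k) (γ : Edge n → ℤ) : Prop :=
  (∀ u, degSeq γ u = 0) ∧ ∀ i j, colorSeq z γ i j = 0

/-- The 1-norm `‖γ‖₁ = ∑_{e ∈ P} |γ_e|`. -/
def norm1 {n : ℕ} (γ : Edge n → ℤ) : ℤ := ∑ e, |γ e|

/-- The set of moves `M_{n,z} = {γ ∈ ker_ℤ DC_{n,z} : ‖γ‖₁ = 4}`. -/
def MSet {n k : ℕ} (z : Fin n → Fin k) : Set (Edge n → ℤ) :=
  {γ | inKer z γ ∧ norm1 γ = 4}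

/-- Degree sequence of a vector in `ℕ^P`. -/
def degSeqN {n : ℕ} (x : Edge n → ℕ) (u : Fin n) : ℕ := ∑ v, entN x u v

/-- Color sequence of a vector in `ℕ^P`. -/
def colorSeqN {n k : ℕ} (z : Fin n → Fin k) (x : Edge n → ℕ) (i j : Fin k) : ℕ :=
  ∑ e : Edge n,
    if (z e.1.1 = i ∧ z e.1.2 = j) ∨ (z e.1.1 = j ∧ z e.1.2 = i) then x e else 0

/-- The fiber `F(b) = {x ∈ ℕ^P : DC_{n,z} x = b}`, where `b = (d; c)`. -/
def Fiber {n k : ℕ} (z : Fin n → Fin k) (d : Fin n → ℤ) (c : Fin k → Fin k → ℤ) :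
    Set (Edge n → ℕ) :=
  {x | (∀ u, (degSeqN x u : ℤ) = d u) ∧ ∀ i j, (colorSeqN z x i j : ℤ) = c i j}

/-- The simple fiber `F̃(b) = F(b) ∩ {0,1}^P`. -/
def SimpleFiber {n k : ℕ} (z : Fin n → Fin k) (d : Fin n → ℤ) (c : Fin k → Fin k → ℤ) :
    Set (Edge n → ℕ) :=
  {x | x ∈ Fiber z d c ∧ ∀ e, x e ≤ 1}

/-- The difference `x − x' ∈ ℤ^P` of two vectors in `ℕ^P`. -/
def diff {n : ℕ} (x x' : Edge n → ℕ) : Edge n → ℤ := fun e => (x e : ℤ) - (x' e : ℤ)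

/-- Two chords `{a,b}` and `{a',b'}` (with `a < b`, `a' < b'`) of the circle cross. -/
def Crossing {n : ℕ} (a b a' b' : Fin n) : Prop :=
  (a < a' ∧ a' < b ∧ b < b') ∨ (a' < a ∧ a < b' ∧ b' < b)

/-- The unordered pairs `{a,b}` and `{a',b'}` are disjoint and do not cross. -/
def NonIntersecting {n : ℕ} (a b a' b' : Fin n) : Prop :=
  a ≠ a' ∧ a ≠ b' ∧ b ≠ a' ∧ b ≠ b' ∧
    ¬ Crossing (min a b) (max a b) (min a' b') (max a' b')

/-- `α` is the leading exponent (leading monomial) of `f` with respect to the strict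
order `r` (where `r β α` means `β ≺ α`). -/
def IsLeading {n : ℕ} {K : Type*} [CommSemiring K]
    (r : (Edge n →₀ ℕ) → (Edge n →₀ ℕ) → Prop)
    (f : MvPolynomial (Edge n) K) (α : Edge n →₀ ℕ) : Prop :=
  α ∈ f.support ∧ ∀ β ∈ f.support, β ≠ α → r β α

open scoped Classical in
/-- The weight of `e ∈ P`: the number of `e' ∈ P` disjoint from `e` that do not cross `e`. -/
noncomputable def weight {n : ℕ} (e : Edge n) : ℕ :=
  (Finset.univ.filter fun e' : Edge n =>
    (e'.1.1 ≠ e.1.1 ∧ e'.1.1 ≠ e.1.2 ∧ e'.1.2 ≠ e.1.1 ∧ e'.1.2 ≠ e.1.2) ∧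
      ¬ Crossing e.1.1 e.1.2 e'.1.1 e'.1.2).card

/-- The weight of a monomial: the sum of the weights of its variables, with multiplicity. -/
noncomputable def weightM {n : ℕ} (α : Edge n →₀ ℕ) : ℕ :=
  ∑ e : Edge n, α e * weight e

section Aux

open Finset
open scoped Classical

variable {n : ℕ}

lemma card_lt_pairs_swap (s : Finset (Fin n)) :
    ((s ×ˢ s).filter fun p => p.1 < p.2).card = ((s ×ˢ s).filter fun p => p.2 < p.1).card := by
  apply Finset.card_nbij' (fun p => (p.2, p.1)) (fun p => (p.2, p.1)) <;>
    simp +contextual [Set.MapsTo, Set.LeftInvOn, Set.RightInvOn, Set.EqOn, Finset.mem_filter, Finset.mem_product, and_comm]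

lemma two_mul_card_lt (s : Finset (Fin n)) :
    2 * ((s ×ˢ s).filter fun p => p.1 < p.2).card = s.card * s.card - s.card := by
  have h1 : s.offDiag =
      ((s ×ˢ s).filter fun p => p.1 < p.2) ∪ ((s ×ˢ s).filter fun p => p.2 < p.1) := by
    ext p
    simp only [Finset.mem_offDiag, Finset.mem_union, Finset.mem_filter, Finset.mem_product]
    constructor
    · rintro ⟨h1, h2, h3⟩
      rcases lt_or_gt_of_ne h3 with h | h
      · exact Or.inl ⟨⟨h1, h2⟩, h⟩
      · exact Or.inr ⟨⟨h1, h2⟩, h⟩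
    · rintro (⟨⟨h1, h2⟩, h⟩ | ⟨⟨h1, h2⟩, h⟩) <;> exact ⟨h1, h2, by omega⟩
  have h2 : Disjoint ((s ×ˢ s).filter fun p => p.1 < p.2)
      ((s ×ˢ s).filter fun p => p.2 < p.1) := by
    rw [Finset.disjoint_left]
    intro p hp hq
    simp only [Finset.mem_filter] at hp hq
    omega
  have h3 := Finset.offDiag_card s
  rw [h1, Finset.card_union_of_disjoint h2, ← card_lt_pairs_swap] at h3
  omega

lemma two_mul_weight (a b : Fin n) (h : a < b) :
    2 * weight (⟨(a, b), h⟩ : Edge n) =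
      ((a : ℕ) * a - a) +
        (((b : ℕ) - a - 1) * ((b : ℕ) - a - 1) - ((b : ℕ) - a - 1)) +
        ((n - 1 - b) * (n - 1 - b) - (n - 1 - b)) +
        2 * ((a : ℕ) * (n - 1 - b)) := by
  have hw : weight (⟨(a, b), h⟩ : Edge n) =
      ((Finset.univ : Finset (Fin n × Fin n)).filter fun p =>
        p.1 < p.2 ∧ (p.1 ≠ a ∧ p.1 ≠ b ∧ p.2 ≠ a ∧ p.2 ≠ b) ∧
          ¬ Crossing a b p.1 p.2).card := by
    unfold weight
    apply Finset.card_nbij' (fun e => e.1) (fun p => if hp : p.1 < p.2 then ⟨p, hp⟩ else ⟨(a,b), h⟩)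
    · intro e he
      simp only [Finset.mem_coe, Finset.mem_filter, Finset.mem_univ, true_and] at he ⊢
      exact ⟨e.2, he⟩
    · intro p hp
      simp only [Finset.mem_coe, Finset.mem_filter, Finset.mem_univ, true_and] at hp ⊢
      rw [dif_pos hp.1]
      exact hp.2
    · intro e he
      simp [e.2]
    · intro p hp
      simp only [Finset.mem_coe, Finset.mem_filter, Finset.mem_univ, true_and] at hp
      simp only [dif_pos hp.1]
  have hset : ((Finset.univ : Finset (Fin n × Fin n)).filter fun p =>
        p.1 < p.2 ∧ (p.1 ≠ a ∧ p.1 ≠ b ∧ p.2 ≠ a ∧ p.2 ≠ b) ∧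
          ¬ Crossing a b p.1 p.2) =
      ((Iio a ×ˢ Iio a).filter fun p => p.1 < p.2) ∪
        ((Ioo a b ×ˢ Ioo a b).filter fun p => p.1 < p.2) ∪
        ((Ioi b ×ˢ Ioi b).filter fun p => p.1 < p.2) ∪
        (Iio a ×ˢ Ioi b) := by
    ext p
    simp only [Finset.mem_filter, Finset.mem_univ, true_and, Finset.mem_union,
      Finset.mem_product, Finset.mem_Iio, Finset.mem_Ioo, Finset.mem_Ioi,
      Crossing, Fin.lt_def, ne_eq, Fin.ext_iff, not_or, not_and]
    omega
  have d1 : Disjoint ((Iio a ×ˢ Iio a).filter fun p : Fin n × Fin n => p.1 < p.2)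
      ((Ioo a b ×ˢ Ioo a b).filter fun p => p.1 < p.2) := by
    rw [Finset.disjoint_left]
    intro p hp hq
    simp only [Finset.mem_filter, Finset.mem_product, Finset.mem_Iio, Finset.mem_Ioo,
      Fin.lt_def] at hp hq
    omega
  have d2 : Disjoint (((Iio a ×ˢ Iio a).filter fun p : Fin n × Fin n => p.1 < p.2) ∪
      ((Ioo a b ×ˢ Ioo a b).filter fun p => p.1 < p.2))
      ((Ioi b ×ˢ Ioi b).filter fun p => p.1 < p.2) := by
    rw [Finset.disjoint_left]
    intro p hp hq
    simp only [Finset.mem_union, Finset.mem_filter, Finset.mem_product, Finset.mem_Iio,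
      Finset.mem_Ioo, Finset.mem_Ioi, Fin.lt_def] at hp hq
    omega
  have d3 : Disjoint ((((Iio a ×ˢ Iio a).filter fun p : Fin n × Fin n => p.1 < p.2) ∪
      ((Ioo a b ×ˢ Ioo a b).filter fun p => p.1 < p.2)) ∪
      ((Ioi b ×ˢ Ioi b).filter fun p => p.1 < p.2))
      (Iio a ×ˢ Ioi b) := by
    rw [Finset.disjoint_left]
    intro p hp hq
    simp only [Finset.mem_union, Finset.mem_filter, Finset.mem_product, Finset.mem_Iio,
      Finset.mem_Ioo, Finset.mem_Ioi, Fin.lt_def] at hp hq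
    omega
  rw [hw, hset, Finset.card_union_of_disjoint d3, Finset.card_union_of_disjoint d2,
    Finset.card_union_of_disjoint d1]
  rw [Nat.mul_add, Nat.mul_add, Nat.mul_add, two_mul_card_lt, two_mul_card_lt,
    two_mul_card_lt, Finset.card_product, Fin.card_Iio, Fin.card_Ioo, Fin.card_Ioi]

lemma weight_int (a b : Fin n) (h : a < b) :
    2 * (weight (⟨(a, b), h⟩ : Edge n) : ℤ) =
      (a : ℤ) * ((a : ℤ) - 1) + ((b : ℤ) - a - 1) * ((b : ℤ) - a - 2) +
        ((n : ℤ) - 1 - b) * ((n : ℤ) - 2 - b) + 2 * (a : ℤ) * ((n : ℤ) - 1 - b) := by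
  have h2 := two_mul_weight a b h
  have hsq : ∀ k : ℕ, k ≤ k * k := by
    intro k
    cases k with
    | zero => simp
    | succ m => exact Nat.le_mul_of_pos_left _ (Nat.succ_pos m)
  have hab : (a : ℕ) < b := h
  have hb : (b : ℕ) < n := b.isLt
  set l : ℕ := (a : ℕ) with hl
  set m : ℕ := (b : ℕ) - a - 1 with hm
  set r : ℕ := n - 1 - (b : ℕ) with hr
  zify [hsq l, hsq m, hsq r] at h2
  have hmz : (m : ℤ) = (b : ℤ) - a - 1 := by omega
  have hrz : (r : ℤ) = (n : ℤ) - 1 - b := by omega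
  rw [hmz, hrz] at h2
  linarith [h2]

lemma weightM_pair (u v : Edge n) :
    weightM (Finsupp.single u 1 + Finsupp.single v 1) = weight u + weight v := by
  simp [weightM, Finsupp.add_apply, Finsupp.single_apply, add_mul, Finset.sum_add_distrib,
    Finset.sum_ite_eq, Finset.sum_ite_eq']

lemma isLeading_monomial_sub {K : Type*} [Field K]
    (r : (Edge n →₀ ℕ) → (Edge n →₀ ℕ) → Prop)
    (α β : Edge n →₀ ℕ) (hne : β ≠ α) (hr : r β α) :
    IsLeading r ((MvPolynomial.monomial α (1 : K)) - MvPolynomial.monomial β 1) α := by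
  constructor
  · rw [MvPolynomial.mem_support_iff, MvPolynomial.coeff_sub, MvPolynomial.coeff_monomial,
      MvPolynomial.coeff_monomial, if_pos rfl, if_neg hne]
    simp
  · intro γ hγ hγα
    have hγβ : γ = β := by
      by_contra hb
      rw [MvPolynomial.mem_support_iff, MvPolynomial.coeff_sub, MvPolynomial.coeff_monomial,
        MvPolynomial.coeff_monomial, if_neg (fun hh => hγα hh.symm),
        if_neg (fun hh : β = γ => hb hh.symm)] at hγ
      simp at hγ
    subst hγβ
    exact hr

lemma X_mul_X {K : Type*} [Field K] (u v : Edge n) :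
    (MvPolynomial.X u * MvPolynomial.X v : MvPolynomial (Edge n) K) =
      MvPolynomial.monomial (Finsupp.single u 1 + Finsupp.single v 1) 1 := by
  rw [MvPolynomial.X, MvPolynomial.X, MvPolynomial.monomial_mul, one_mul]

end Aux
/-- For `1 ≤ a < b < c < d ≤ n`, each of the two non-crossing perfect
matchings on `{a,b,c,d}` has strictly larger total weight than the crossing matching;
consequently, for any order refining the weights, the leading monomial of
`x_{ab}x_{cd} − x_{ac}x_{bd}` is `x_{ab}x_{cd}` and that of `x_{ad}x_{bc} − x_{ac}x_{bd}`
is `x_{ad}x_{bc}`. -/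
theorem weight_of_noncrossing_gt_crossing (n : ℕ) (hn : 4 ≤ n) (K : Type*) [Field K]
    (a b c d : Fin n) (hab : a < b) (hbc : b < c) (hcd : c < d) :
    weight (⟨(a, b), hab⟩ : Edge n) + weight (⟨(c, d), hcd⟩ : Edge n) >
      weight (⟨(a, c), hab.trans hbc⟩ : Edge n) +
        weight (⟨(b, d), hbc.trans hcd⟩ : Edge n) ∧
    weight (⟨(a, d), (hab.trans hbc).trans hcd⟩ : Edge n) +
        weight (⟨(b, c), hbc⟩ : Edge n) >
      weight (⟨(a, c), hab.trans hbc⟩ : Edge n) +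
        weight (⟨(b, d), hbc.trans hcd⟩ : Edge n) ∧
    (∀ r : (Edge n →₀ ℕ) → (Edge n →₀ ℕ) → Prop,
      (∀ α β : Edge n →₀ ℕ, weightM α < weightM β → r α β) →
      IsLeading r
        (MvPolynomial.X (⟨(a, b), hab⟩ : Edge n) *
            MvPolynomial.X (⟨(c, d), hcd⟩ : Edge n) -
          MvPolynomial.X (⟨(a, c), hab.trans hbc⟩ : Edge n) *
            MvPolynomial.X (⟨(b, d), hbc.trans hcd⟩ : Edge n) : MvPolynomial (Edge n) K)
        (Finsupp.single (⟨(a, b), hab⟩ : Edge n) 1 +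
          Finsupp.single (⟨(c, d), hcd⟩ : Edge n) 1) ∧
      IsLeading r
        (MvPolynomial.X (⟨(a, d), (hab.trans hbc).trans hcd⟩ : Edge n) *
            MvPolynomial.X (⟨(b, c), hbc⟩ : Edge n) -
          MvPolynomial.X (⟨(a, c), hab.trans hbc⟩ : Edge n) *
            MvPolynomial.X (⟨(b, d), hbc.trans hcd⟩ : Edge n) : MvPolynomial (Edge n) K)
        (Finsupp.single (⟨(a, d), (hab.trans hbc).trans hcd⟩ : Edge n) 1 +
          Finsupp.single (⟨(b, c), hbc⟩ : Edge n) 1)) := by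
  have hEab := weight_int a b hab
  have hEcd := weight_int c d hcd
  have hEac := weight_int a c (hab.trans hbc)
  have hEbd := weight_int b d (hbc.trans hcd)
  have hEad := weight_int a d ((hab.trans hbc).trans hcd)
  have hEbc := weight_int b c hbc
  have hab' : (a : ℕ) < b := hab
  have hbc' : (b : ℕ) < c := hbc
  have hcd' : (c : ℕ) < d := hcd
  have hdn : (d : ℕ) < n := d.isLt
  have hp1 : (0 : ℤ) < (c : ℤ) - b := by push_cast; omega
  have hp2 : (0 : ℤ) < (n : ℤ) - d + a := by push_cast; omega
  have hp3 : (0 : ℤ) < (b : ℤ) - a := by push_cast; omega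
  have hp4 : (0 : ℤ) < (d : ℤ) - c := by push_cast; omega
  have key1 : weight (⟨(a, b), hab⟩ : Edge n) + weight (⟨(c, d), hcd⟩ : Edge n) >
      weight (⟨(a, c), hab.trans hbc⟩ : Edge n) +
        weight (⟨(b, d), hbc.trans hcd⟩ : Edge n) := by
    have hz : (weight (⟨(a, b), hab⟩ : Edge n) : ℤ) + weight (⟨(c, d), hcd⟩ : Edge n) >
        (weight (⟨(a, c), hab.trans hbc⟩ : Edge n) : ℤ) +
          weight (⟨(b, d), hbc.trans hcd⟩ : Edge n) := by
      have id1 : 2 * ((weight (⟨(a, b), hab⟩ : Edge n) : ℤ) + weight (⟨(c, d), hcd⟩ : Edge n))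
          - 2 * ((weight (⟨(a, c), hab.trans hbc⟩ : Edge n) : ℤ) +
            weight (⟨(b, d), hbc.trans hcd⟩ : Edge n)) =
          4 * (((c : ℤ) - b) * ((n : ℤ) - d + a)) := by
        linear_combination hEab + hEcd - hEac - hEbd
      linarith [mul_pos hp1 hp2]
    exact_mod_cast hz
  have key2 : weight (⟨(a, d), (hab.trans hbc).trans hcd⟩ : Edge n) +
        weight (⟨(b, c), hbc⟩ : Edge n) >
      weight (⟨(a, c), hab.trans hbc⟩ : Edge n) +
        weight (⟨(b, d), hbc.trans hcd⟩ : Edge n) := by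
    have hz : (weight (⟨(a, d), (hab.trans hbc).trans hcd⟩ : Edge n) : ℤ) +
          weight (⟨(b, c), hbc⟩ : Edge n) >
        (weight (⟨(a, c), hab.trans hbc⟩ : Edge n) : ℤ) +
          weight (⟨(b, d), hbc.trans hcd⟩ : Edge n) := by
      have id2 : 2 * ((weight (⟨(a, d), (hab.trans hbc).trans hcd⟩ : Edge n) : ℤ) +
            weight (⟨(b, c), hbc⟩ : Edge n))
          - 2 * ((weight (⟨(a, c), hab.trans hbc⟩ : Edge n) : ℤ) +
            weight (⟨(b, d), hbc.trans hcd⟩ : Edge n)) =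
          4 * (((b : ℤ) - a) * ((d : ℤ) - c)) := by
        linear_combination hEad + hEbc - hEac - hEbd
      linarith [mul_pos hp3 hp4]
    exact_mod_cast hz
  refine ⟨key1, key2, fun r hr => ⟨?_, ?_⟩⟩
  · rw [X_mul_X, X_mul_X]
    apply isLeading_monomial_sub
    · intro h
      have h2 := congrArg weightM h
      rw [weightM_pair, weightM_pair] at h2
      omega
    · apply hr
      rw [weightM_pair, weightM_pair]
      exact key1
  · rw [X_mul_X, X_mul_X]
    apply isLeading_monomial_sub
    · intro h
      have h2 := congrArg weightM h
      rw [weightM_pair, weightM_pair] at h2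
      omega
    · apply hr
      rw [weightM_pair, weightM_pair]
      exact key2
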